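/- Let m ≥ 1, x₁, …, x_m ∈ ℝ, q > 0, α ∈ (0,1) and T > 0. Define N(t) = Card{k : 1 ≤ k ≤ m, |x_k| ≥ t} and G(t) = 2 − 2Φ(t), where Φ is the standard normal distribution function. Suppose the set S = { t ∈ [0,T] : G(t)·q / max(N(t), 1) ≤ α } is nonempty and that t̂ := inf S satisfies 0 < t̂ < T. Then G(t̂)·q / max(N(t̂), 1) = α. -/

import Mathlib

open ProbabilityTheory Finset MeasureTheory Real
open scoped ENNReal NNReal

/-- The standard normal distribution function `Φ(t) = P(N(0,1) ≤ t)`. -/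
noncomputable def Phi (t : ℝ) : ℝ := ((gaussianReal 0 1) (Set.Iic t)).toReal

/-- `G(t) = 2 − 2Φ(t)`. -/
noncomputable def Gfun (t : ℝ) : ℝ := 2 - 2 * Phi t

lemma gaussianPDF_le_one (x : ℝ) : gaussianPDF 0 1 x ≤ 1 := by
  rw [gaussianPDF, show (1 : ℝ≥0∞) = ENNReal.ofReal 1 by simp]
  apply ENNReal.ofReal_le_ofReal
  rw [gaussianPDFReal]
  have h1 : (√(2 * Real.pi * (1 : ℝ≥0)))⁻¹ ≤ 1 := by
    rw [inv_le_one_iff₀]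
    right
    rw [show (1:ℝ) = √1 by simp]
    apply Real.sqrt_le_sqrt
    push_cast
    nlinarith [Real.pi_gt_three]
  have h2 : Real.exp (- (x - 0)^2 / (2 * (1 : ℝ≥0))) ≤ 1 := by
    rw [Real.exp_le_one_iff]
    have : (0:ℝ) ≤ (x - 0)^2 := sq_nonneg _
    have : ((2 : ℝ≥0) * (1:ℝ≥0) : ℝ) > 0 := by norm_num
    push_cast
    nlinarith
  have h3 : (0:ℝ) ≤ (√(2 * Real.pi * (1 : ℝ≥0)))⁻¹ := by positivity
  calc (√(2 * Real.pi * (1 : ℝ≥0)))⁻¹ * Real.exp (- (x - 0)^2 / (2 * (1 : ℝ≥0)))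
      ≤ 1 * 1 := by
        apply mul_le_mul h1 h2 (Real.exp_nonneg _) zero_le_one
    _ = 1 := by norm_num

lemma Phi_incr {s t : ℝ} (h : s ≤ t) : Phi t ≤ Phi s + (t - s) := by
  have hprob : IsProbabilityMeasure (gaussianReal 0 1) := inferInstance
  have hunion : Set.Iic s ∪ Set.Ioc s t = Set.Iic t := Set.Iic_union_Ioc_eq_Iic h
  have hIoc : (gaussianReal 0 1) (Set.Ioc s t) ≤ ENNReal.ofReal (t - s) := by
    rw [gaussianReal_apply 0 one_ne_zero]
    calc ∫⁻ x in Set.Ioc s t, gaussianPDF 0 1 x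
        ≤ ∫⁻ _ in Set.Ioc s t, 1 :=
          MeasureTheory.lintegral_mono fun x => gaussianPDF_le_one x
      _ = MeasureTheory.volume (Set.Ioc s t) := by simp
      _ = ENNReal.ofReal (t - s) := Real.volume_Ioc
  have hmeas : (gaussianReal 0 1) (Set.Iic t)
      ≤ (gaussianReal 0 1) (Set.Iic s) + ENNReal.ofReal (t - s) := by
    calc (gaussianReal 0 1) (Set.Iic t)
        = (gaussianReal 0 1) (Set.Iic s ∪ Set.Ioc s t) := by rw [hunion]
      _ ≤ (gaussianReal 0 1) (Set.Iic s) + (gaussianReal 0 1) (Set.Ioc s t) :=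
          MeasureTheory.measure_union_le _ _
      _ ≤ _ := add_le_add le_rfl hIoc
  have h1 : ((gaussianReal 0 1) (Set.Iic t)).toReal
      ≤ ((gaussianReal 0 1) (Set.Iic s) + ENNReal.ofReal (t - s)).toReal := by
    apply ENNReal.toReal_mono _ hmeas
    exact ENNReal.add_ne_top.2 ⟨MeasureTheory.measure_ne_top _ _, ENNReal.ofReal_ne_top⟩
  rw [ENNReal.toReal_add (MeasureTheory.measure_ne_top _ _) ENNReal.ofReal_ne_top,
    ENNReal.toReal_ofReal (sub_nonneg.2 h)] at h1
  exact h1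

lemma Phi_mono : Monotone Phi := by
  intro s t h
  exact ENNReal.toReal_mono (MeasureTheory.measure_ne_top _ _)
    (MeasureTheory.measure_mono (Set.Iic_subset_Iic.2 h))

lemma continuous_Phi : Continuous Phi := by
  have : LipschitzWith 1 Phi := by
    apply LipschitzWith.of_dist_le_mul
    intro s t
    rw [Real.dist_eq, Real.dist_eq, NNReal.coe_one, one_mul]
    rcases le_total s t with h | h
    · rw [abs_of_nonpos (by linarith [Phi_mono h]), abs_of_nonpos (by linarith)]
      linarith [Phi_incr h]
    · rw [abs_of_nonneg (by linarith [Phi_mono h]), abs_of_nonneg (by linarith)]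
      linarith [Phi_incr h]
  exact this.continuous

lemma continuous_Gfun : Continuous Gfun := by
  unfold Gfun
  exact continuous_const.sub (continuous_const.mul continuous_Phi)

/-- Let `x₁, …, x_m ∈ ℝ`, `q > 0`, `α ∈ (0,1)`, `T > 0`.  Define
`N(t) = Card{k : |x_k| ≥ t}`.  Suppose the set
`S = {t ∈ [0,T] : G(t) q / max(N(t),1) ≤ α}` is nonempty and `t̂ := inf S` satisfies
`0 < t̂ < T`.  Then `G(t̂) q / max(N(t̂),1) = α`. -/
theorem stmt_13 {m : ℕ} (hm : 1 ≤ m) (x : Fin m → ℝ) (q α T : ℝ)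
    (hq : 0 < q) (hα0 : 0 < α) (hα1 : α < 1) (hT : 0 < T)
    (N : ℝ → ℝ) (hN : ∀ t, N t = ((Finset.univ.filter (fun k => t ≤ |x k|)).card : ℝ))
    (S : Set ℝ) (hS : S = {t : ℝ | t ∈ Set.Icc 0 T ∧ Gfun t * q / max (N t) 1 ≤ α})
    (hne : S.Nonempty) (that : ℝ) (hthat : that = sInf S)
    (h0 : 0 < that) (h1 : that < T) :
    Gfun that * q / max (N that) 1 = α := by
  have hbdd : BddBelow S := ⟨0, fun t ht => by rw [hS] at ht; exact ht.1.1⟩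
  have hle_that : ∀ s ∈ S, that ≤ s := fun s hs => hthat ▸ csInf_le hbdd hs
  have hNanti : ∀ ⦃a b : ℝ⦄, a ≤ b → N b ≤ N a := by
    intro a b hab
    rw [hN, hN]
    have hsub : (Finset.univ.filter (fun k => b ≤ |x k|)) ⊆
        (Finset.univ.filter (fun k => a ≤ |x k|)) := by
      intro k hk
      simp only [Finset.mem_filter, Finset.mem_univ, true_and] at *
      linarith
    exact_mod_cast Finset.card_le_card hsub
  have hmaxpos : ∀ t : ℝ, (0:ℝ) < max (N t) 1 :=
    fun t => lt_of_lt_of_le zero_lt_one (le_max_right _ _)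
  -- Step 1 : Gfun that * q ≤ α * max (N that) 1
  have step1 : Gfun that * q ≤ α * max (N that) 1 := by
    have hclos : that ∈ closure S := hthat ▸ csInf_mem_closure hne hbdd
    have hnebot : (nhdsWithin that S).NeBot := mem_closure_iff_nhdsWithin_neBot.mp hclos
    have htend : Filter.Tendsto (fun s => Gfun s * q) (nhdsWithin that S)
        (nhds (Gfun that * q)) :=
      ((continuous_Gfun.mul continuous_const).tendsto that).mono_left nhdsWithin_le_nhds
    refine le_of_tendsto htend (eventually_nhdsWithin_of_forall ?_)
    intro s hs
    have hsS := hs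
    rw [hS] at hsS
    have h2 : Gfun s * q ≤ α * max (N s) 1 := (div_le_iff₀ (hmaxpos s)).mp hsS.2
    have h3 : max (N s) 1 ≤ max (N that) 1 :=
      max_le_max (hNanti (hle_that s hs)) le_rfl
    calc Gfun s * q ≤ α * max (N s) 1 := h2
      _ ≤ α * max (N that) 1 := by nlinarith
  -- local constancy of N to the left of that
  obtain ⟨b, hb_lt, hb_nonneg, hbconst⟩ :
      ∃ b : ℝ, b < that ∧ 0 ≤ b ∧ ∀ t, b < t → t ≤ that → N t = N that := by
    set B : Finset ℝ := (Finset.univ.filter (fun k => |x k| < that)).image (fun k => |x k|)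
      with hB
    by_cases hBne : B.Nonempty
    · refine ⟨max (B.max' hBne) 0, ?_, le_max_right _ _, ?_⟩
      · apply max_lt _ h0
        obtain ⟨k, hk, hkeq⟩ := Finset.mem_image.mp (B.max'_mem hBne)
        rw [← hkeq]
        exact (Finset.mem_filter.mp hk).2
      · intro t ht hte
        rw [hN, hN]
        congr 2
        ext k
        simp only [Finset.mem_filter, Finset.mem_univ, true_and]
        constructor
        · intro htk
          by_contra hc
          push_neg at hc
          have hkB : |x k| ∈ B := Finset.mem_image.mpr
            ⟨k, Finset.mem_filter.mpr ⟨Finset.mem_univ k, hc⟩, rfl⟩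
          have := B.le_max' _ hkB
          have := le_max_left (B.max' hBne) (0:ℝ)
          linarith
        · intro htk; linarith
    · refine ⟨0, h0, le_rfl, ?_⟩
      intro t ht hte
      rw [hN, hN]
      congr 2
      ext k
      simp only [Finset.mem_filter, Finset.mem_univ, true_and]
      have hk : ¬ |x k| < that := by
        intro hc
        exact hBne ⟨|x k|, Finset.mem_image.mpr
          ⟨k, Finset.mem_filter.mpr ⟨Finset.mem_univ k, hc⟩, rfl⟩⟩
      push_neg at hk
      constructor
      · intro _; exact hk
      · intro htk; linarith
  -- Step 2 : α * max (N that) 1 ≤ Gfun that * q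
  have step2 : α * max (N that) 1 ≤ Gfun that * q := by
    have htend : Filter.Tendsto (fun s => Gfun s * q) (nhdsWithin that (Set.Iio that))
        (nhds (Gfun that * q)) :=
      ((continuous_Gfun.mul continuous_const).tendsto that).mono_left nhdsWithin_le_nhds
    refine ge_of_tendsto htend ?_
    have hmem : Set.Ioo b that ∈ nhdsWithin that (Set.Iio that) :=
      Ioo_mem_nhdsLT_of_mem ⟨hb_lt, le_rfl⟩
    filter_upwards [hmem] with t ht
    have htS : t ∉ S := fun hts => absurd (hle_that t hts) (not_le.2 ht.2)
    rw [hS] at htS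
    simp only [Set.mem_setOf_eq, Set.mem_Icc, not_and, not_le] at htS
    have hgt : α < Gfun t * q / max (N t) 1 :=
      htS ⟨le_of_lt (lt_of_le_of_lt hb_nonneg ht.1), le_of_lt (lt_trans ht.2 h1)⟩
    have hNt : N t = N that := hbconst t ht.1 (le_of_lt ht.2)
    have := (lt_div_iff₀ (hmaxpos t)).mp hgt
    rw [hNt] at this
    linarith
  have := le_antisymm step1 step2
  rw [div_eq_iff (ne_of_gt (hmaxpos that))]
  linarith
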